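/- Let L ≥ 2, let n_0, n_1, …, n_L be positive integers, and let f : ℝ^{n_L × n_0} → ℝ be continuously differentiable. Define ℓ(U_L, …, U_1) := f(U_L ⋯ U_1) for matrices U_i ∈ ℝ^{n_i × n_{i−1}}. If t ↦ (U_L(t), …, U_1(t)) is a differentiable curve on [0,T) satisfying the gradient flow U_i'(t) = −∂ℓ/∂U_i(U_L(t), …, U_1(t)) for each i and all t, then for every i ∈ {1, …, L−1} the matrix U_{i+1}(t)^⊤ U_{i+1}(t) − U_i(t) U_i(t)^⊤ is constant in t, i.e. equal to its value at t = 0 for all t ∈ [0,T). -/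

import Mathlib

open scoped Matrix

attribute [local instance] Matrix.normedAddCommGroup Matrix.normedSpace

/-- The matrices `U_i` (for `0 ≤ i < L`) encoded in a Euclidean parameter vector. -/
noncomputable def layerMatrix (L : ℕ) (n : ℕ → ℕ)
    (θ : EuclideanSpace ℝ ((i : Fin L) × (Fin (n (i + 1)) × Fin (n i)))) (i : Fin L) :
    Matrix (Fin (n (i + 1))) (Fin (n i)) ℝ :=
  Matrix.of fun a b => θ ⟨i, a, b⟩

/-- `prefixProd n U j = U (j-1) * ⋯ * U 1 * U 0 : Matrix (Fin (n j)) (Fin (n 0)) ℝ`. -/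
noncomputable def prefixProd (n : ℕ → ℕ)
    (U : ∀ i : ℕ, Matrix (Fin (n (i + 1))) (Fin (n i)) ℝ) :
    ∀ j : ℕ, Matrix (Fin (n j)) (Fin (n 0)) ℝ
  | 0 => 1
  | j + 1 => U j * prefixProd n U j

/-- The matrices of a parameter vector, extended by zero beyond the first `L` layers. -/
noncomputable def layerMatrixExt (L : ℕ) (n : ℕ → ℕ)
    (θ : EuclideanSpace ℝ ((i : Fin L) × (Fin (n (i + 1)) × Fin (n i)))) (i : ℕ) :
    Matrix (Fin (n (i + 1))) (Fin (n i)) ℝ :=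
  if h : i < L then layerMatrix L n θ ⟨i, h⟩ else 0

section Helpers

variable {p q r : Type*} [Fintype p] [Fintype q] [Fintype r]
  [DecidableEq p] [DecidableEq q] [DecidableEq r]

/-- Matrix multiplication as a continuous bilinear map (in finite dimension). -/
noncomputable def matMulCLM :
    Matrix p q ℝ →L[ℝ] Matrix q r ℝ →L[ℝ] Matrix p r ℝ :=
  LinearMap.toContinuousLinearMap
  { toFun := fun A => LinearMap.toContinuousLinearMap
      { toFun := fun B => A * B
        map_add' := fun B B' => Matrix.mul_add A B B'
        map_smul' := fun c B => Matrix.mul_smul A c B }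
    map_add' := fun A A' => ContinuousLinearMap.ext fun B => Matrix.add_mul A A' B
    map_smul' := fun c A => ContinuousLinearMap.ext fun B => Matrix.smul_mul c A B }

@[simp] lemma matMulCLM_apply (A : Matrix p q ℝ) (B : Matrix q r ℝ) :
    matMulCLM A B = A * B := rfl

theorem hasFDerivAt_matmul {E : Type*} [NormedAddCommGroup E] [NormedSpace ℝ E]
    {A : E → Matrix p q ℝ} {B : E → Matrix q r ℝ} {A' : E →L[ℝ] Matrix p q ℝ}
    {B' : E →L[ℝ] Matrix q r ℝ} {x : E} (hA : HasFDerivAt A A' x) (hB : HasFDerivAt B B' x) :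
    ∃ D : E →L[ℝ] Matrix p r ℝ, HasFDerivAt (fun y => A y * B y) D x ∧
      ∀ v, D v = A' v * B x + A x * B' v := by
  have hb : IsBoundedBilinearMap ℝ
      (fun z : Matrix p q ℝ × Matrix q r ℝ => matMulCLM z.1 z.2) :=
    (matMulCLM (p := p) (q := q) (r := r)).isBoundedBilinearMap
  refine ⟨(hb.deriv (A x, B x)).comp (A'.prod B'),
    (hb.hasFDerivAt (A x, B x)).comp (f := fun y => (A y, B y)) x (HasFDerivAt.prodMk hA hB), fun v => ?_⟩
  simp only [ContinuousLinearMap.coe_comp', Function.comp_apply,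
    ContinuousLinearMap.prod_apply, hb.deriv_apply, matMulCLM_apply]
  exact add_comm _ _

lemma sum_eval_L1 (ψ : Matrix p r ℝ →ₗ[ℝ] ℝ) (M : Matrix p q ℝ) (b : q) (a : r) :
    ∑ c, ψ (Matrix.single c a 1) * M c b = ψ (M * Matrix.single b a (1:ℝ)) := by
  have h1 : M * Matrix.single b a (1 : ℝ)
      = ∑ c, M c b • Matrix.single c a 1 := by
    ext x y
    simp [Matrix.mul_apply, Matrix.single, ite_and, Matrix.sum_apply]
  rw [h1, map_sum]
  refine Finset.sum_congr rfl fun c _ => ?_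
  rw [map_smul, smul_eq_mul, mul_comm]

lemma sum_eval_L2 (ψ : Matrix p r ℝ →ₗ[ℝ] ℝ) (M : Matrix p q ℝ) (a : q) (b : r) :
    ∑ c, M c a * ψ (Matrix.single c b 1) = ψ (M * Matrix.single a b (1:ℝ)) := by
  rw [← sum_eval_L1 ψ M a b]
  exact Finset.sum_congr rfl fun c _ => mul_comm _ _

lemma sum_eval_L3 (ψ : Matrix r q ℝ →ₗ[ℝ] ℝ) (M : Matrix p q ℝ) (b : p) (a : r) :
    ∑ c, ψ (Matrix.single a c 1) * M b c = ψ (Matrix.single a b (1:ℝ) * M) := by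
  have h1 : Matrix.single a b (1 : ℝ) * M
      = ∑ c, M b c • Matrix.single a c 1 := by
    ext x y
    simp [Matrix.mul_apply, Matrix.single, ite_and, Matrix.sum_apply]
  rw [h1, map_sum]
  refine Finset.sum_congr rfl fun c _ => ?_
  rw [map_smul, smul_eq_mul, mul_comm]

lemma sum_eval_L4 (ψ : Matrix r q ℝ →ₗ[ℝ] ℝ) (M : Matrix p q ℝ) (a : p) (b : r) :
    ∑ c, M a c * ψ (Matrix.single b c 1) = ψ (Matrix.single b a (1:ℝ) * M) := by
  rw [← sum_eval_L3 ψ M a b]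
  exact Finset.sum_congr rfl fun c _ => mul_comm _ _

end Helpers

section LayerCalc

variable (L : ℕ) (n : ℕ → ℕ)

/-- The parameter space. -/
abbrev Param := EuclideanSpace ℝ ((i : Fin L) × (Fin (n (i + 1)) × Fin (n i)))

/-- The `j`-th layer matrix as a linear map of the parameters. -/
noncomputable def extLM (j : ℕ) :
    Param L n →ₗ[ℝ] Matrix (Fin (n (j + 1))) (Fin (n j)) ℝ where
  toFun θ := layerMatrixExt L n θ j
  map_add' θ η := by
    unfold layerMatrixExt
    split_ifs with h
    · ext a b; simp [layerMatrix]
    · simp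
  map_smul' c θ := by
    unfold layerMatrixExt
    split_ifs with h
    · ext a b; simp [layerMatrix]
    · simp

noncomputable def extCLM (j : ℕ) :
    Param L n →L[ℝ] Matrix (Fin (n (j + 1))) (Fin (n j)) ℝ :=
  LinearMap.toContinuousLinearMap (extLM L n j)

@[simp] lemma extCLM_apply (j : ℕ) (θ : Param L n) :
    extCLM L n j θ = layerMatrixExt L n θ j := rfl

/-- The value of the derivative of `θ ↦ prefixProd n (layerMatrixExt L n θ) m`. -/
noncomputable def dval (θ v : Param L n) : ∀ m : ℕ, Matrix (Fin (n m)) (Fin (n 0)) ℝ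
  | 0 => 0
  | m + 1 => layerMatrixExt L n v m * prefixProd n (layerMatrixExt L n θ) m
      + layerMatrixExt L n θ m * dval θ v m

theorem hasFDerivAt_prefixProd (θ : Param L n) :
    ∀ m : ℕ, ∃ D : Param L n →L[ℝ] Matrix (Fin (n m)) (Fin (n 0)) ℝ,
      HasFDerivAt (fun p : Param L n => prefixProd n (layerMatrixExt L n p) m) D θ ∧
      ∀ v, D v = dval L n θ v m := by
  intro m
  induction m with
  | zero =>
    exact ⟨0, hasFDerivAt_const _ _, fun v => by simp [dval]⟩
  | succ m ih =>
    obtain ⟨D, hD, hDv⟩ := ih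
    obtain ⟨D', hD', hv⟩ :=
      hasFDerivAt_matmul ((extCLM L n m).hasFDerivAt (x := θ)) hD
    refine ⟨D', hD', fun v => ?_⟩
    rw [hv, hDv]
    rfl

theorem gradient_formula (f : Matrix (Fin (n L)) (Fin (n 0)) ℝ → ℝ) (hf : ContDiff ℝ 1 f)
    (θ : Param L n) (s : (i : Fin L) × (Fin (n (i + 1)) × Fin (n i))) :
    gradient (fun p => f (prefixProd n (layerMatrixExt L n p) L)) θ s =
      fderiv ℝ f (prefixProd n (layerMatrixExt L n θ) L)
        (dval L n θ (EuclideanSpace.single s 1) L) := by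
  obtain ⟨D, hD, hv⟩ := hasFDerivAt_prefixProd L n θ L
  set W := prefixProd n (layerMatrixExt L n θ) L with hW
  set g : Param L n → ℝ := fun p => f (prefixProd n (layerMatrixExt L n p) L) with hg
  have hfW : HasFDerivAt f (fderiv ℝ f W) W := ((hf.differentiable one_ne_zero) W).hasFDerivAt
  have hℓ : HasFDerivAt g ((fderiv ℝ f W).comp D) θ := hfW.comp θ hD
  have h0 : (inner ℝ (gradient g θ) (EuclideanSpace.single s 1) : ℝ)
      = fderiv ℝ g θ (EuclideanSpace.single s 1) := by
    rw [gradient]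
    exact InnerProductSpace.toDual_symm_apply
  rw [EuclideanSpace.inner_single_right] at h0
  simp only [map_one, one_mul, RCLike.star_def, starRingEnd_apply, star_trivial] at h0
  rw [h0, hℓ.fderiv]
  simp [hv]

theorem prefixProd_update_of_le (U : ∀ i : ℕ, Matrix (Fin (n (i + 1))) (Fin (n i)) ℝ)
    (j : ℕ) (M : Matrix (Fin (n (j + 1))) (Fin (n j)) ℝ) :
    ∀ m ≤ j, prefixProd n (Function.update U j M) m = prefixProd n U m := by
  intro m
  induction m with
  | zero => intro _; rfl
  | succ m ih =>
    intro h
    show Function.update U j M m * prefixProd n (Function.update U j M) m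
        = U m * prefixProd n U m
    rw [Function.update_of_ne (by omega), ih (by omega)]

theorem layerMatrixExt_single_ne (j : Fin L) (a : Fin (n ((j : ℕ) + 1))) (b : Fin (n (j : ℕ)))
    {k : ℕ} (hk : k ≠ (j : ℕ)) :
    layerMatrixExt L n (EuclideanSpace.single ⟨j, (a, b)⟩ 1) k = 0 := by
  unfold layerMatrixExt
  split_ifs with h
  · ext x y
    simp only [layerMatrix, Matrix.of_apply, EuclideanSpace.single_apply, Matrix.zero_apply]
    rw [if_neg]
    intro hEq
    exact hk (congrArg (fun z => (z.1 : ℕ)) hEq)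
  · rfl

theorem layerMatrixExt_single_self (j : Fin L) (a : Fin (n ((j : ℕ) + 1)))
    (b : Fin (n (j : ℕ))) :
    layerMatrixExt L n (EuclideanSpace.single ⟨j, (a, b)⟩ 1) (j : ℕ)
      = Matrix.single a b 1 := by
  unfold layerMatrixExt
  rw [dif_pos j.isLt]
  ext x y
  simp only [layerMatrix, Matrix.of_apply, EuclideanSpace.single_apply, Fin.eta,
    Matrix.single]
  by_cases hx : x = a <;> by_cases hy : y = b
  · simp [hx, hy, Sigma.ext_iff]
  · simp [hx, hy, Sigma.ext_iff, Prod.ext_iff, Ne.symm hy]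
  · simp [hx, hy, Sigma.ext_iff, Prod.ext_iff, Ne.symm hx]
  · simp [hx, hy, Sigma.ext_iff, Prod.ext_iff, Ne.symm hx, Ne.symm hy]

theorem dval_single_of_le (θ : Param L n) (j : Fin L) (a : Fin (n ((j : ℕ) + 1)))
    (b : Fin (n (j : ℕ))) :
    ∀ m ≤ (j : ℕ), dval L n θ (EuclideanSpace.single ⟨j, (a, b)⟩ 1) m = 0 := by
  intro m
  induction m with
  | zero => intro _; rfl
  | succ m ih =>
    intro h
    show layerMatrixExt L n (EuclideanSpace.single ⟨j, (a, b)⟩ 1) m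
          * prefixProd n (layerMatrixExt L n θ) m
        + layerMatrixExt L n θ m * dval L n θ (EuclideanSpace.single ⟨j, (a, b)⟩ 1) m = 0
    rw [layerMatrixExt_single_ne L n j a b (by omega), ih (by omega)]
    simp

theorem dval_single_shift (θ : Param L n) (j : Fin L) (a : Fin (n ((j : ℕ) + 1)))
    (b : Fin (n (j : ℕ))) :
    ∀ s : ℕ, dval L n θ (EuclideanSpace.single ⟨j, (a, b)⟩ 1) ((j : ℕ) + 1 + s) =
      prefixProd n (Function.update (layerMatrixExt L n θ) (j : ℕ)
        (Matrix.single a b 1)) ((j : ℕ) + 1 + s) := by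
  intro s
  induction s with
  | zero =>
    show layerMatrixExt L n (EuclideanSpace.single ⟨j, (a, b)⟩ 1) (j : ℕ)
          * prefixProd n (layerMatrixExt L n θ) (j : ℕ)
        + layerMatrixExt L n θ (j : ℕ)
          * dval L n θ (EuclideanSpace.single ⟨j, (a, b)⟩ 1) (j : ℕ)
      = Function.update (layerMatrixExt L n θ) (j : ℕ) (Matrix.single a b 1) (j : ℕ)
          * prefixProd n (Function.update (layerMatrixExt L n θ) (j : ℕ)
              (Matrix.single a b 1)) (j : ℕ)
    rw [layerMatrixExt_single_self, dval_single_of_le L n θ j a b _ le_rfl,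
      Function.update_self, prefixProd_update_of_le n _ _ _ _ le_rfl, Matrix.mul_zero, add_zero]
  | succ s ih =>
    show layerMatrixExt L n (EuclideanSpace.single ⟨j, (a, b)⟩ 1) ((j : ℕ) + 1 + s)
          * prefixProd n (layerMatrixExt L n θ) ((j : ℕ) + 1 + s)
        + layerMatrixExt L n θ ((j : ℕ) + 1 + s)
          * dval L n θ (EuclideanSpace.single ⟨j, (a, b)⟩ 1) ((j : ℕ) + 1 + s)
      = Function.update (layerMatrixExt L n θ) (j : ℕ) (Matrix.single a b 1)
            ((j : ℕ) + 1 + s)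
          * prefixProd n (Function.update (layerMatrixExt L n θ) (j : ℕ)
              (Matrix.single a b 1)) ((j : ℕ) + 1 + s)
    rw [layerMatrixExt_single_ne L n j a b (by omega), ih,
      Function.update_of_ne (by omega), Matrix.zero_mul, zero_add]

theorem dval_single_L (θ : Param L n) (j : Fin L) (a : Fin (n ((j : ℕ) + 1)))
    (b : Fin (n (j : ℕ))) :
    dval L n θ (EuclideanSpace.single ⟨j, (a, b)⟩ 1) L =
      prefixProd n (Function.update (layerMatrixExt L n θ) (j : ℕ)
        (Matrix.single a b 1)) L := by
  have hjL := j.isLt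
  have h : (j : ℕ) + 1 + (L - ((j : ℕ) + 1)) = L := by omega
  have := dval_single_shift L n θ j a b (L - ((j : ℕ) + 1))
  rwa [h] at this

theorem prefixProd_update_add (U : ∀ i : ℕ, Matrix (Fin (n (i + 1))) (Fin (n i)) ℝ)
    (j : ℕ) (M M' : Matrix (Fin (n (j + 1))) (Fin (n j)) ℝ) :
    ∀ s : ℕ, prefixProd n (Function.update U j (M + M')) (j + 1 + s)
      = prefixProd n (Function.update U j M) (j + 1 + s)
        + prefixProd n (Function.update U j M') (j + 1 + s) := by
  intro s
  induction s with
  | zero =>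
    show Function.update U j (M + M') j * prefixProd n (Function.update U j (M + M')) j
      = Function.update U j M j * prefixProd n (Function.update U j M) j
        + Function.update U j M' j * prefixProd n (Function.update U j M') j
    rw [Function.update_self, Function.update_self, Function.update_self,
      prefixProd_update_of_le n _ _ _ _ le_rfl, prefixProd_update_of_le n _ _ _ _ le_rfl,
      prefixProd_update_of_le n _ _ _ _ le_rfl, Matrix.add_mul]
  | succ s ih =>
    show Function.update U j (M + M') (j + 1 + s)
          * prefixProd n (Function.update U j (M + M')) (j + 1 + s)
      = Function.update U j M (j + 1 + s) * prefixProd n (Function.update U j M) (j + 1 + s)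
        + Function.update U j M' (j + 1 + s)
          * prefixProd n (Function.update U j M') (j + 1 + s)
    rw [Function.update_of_ne (by omega), Function.update_of_ne (by omega),
      Function.update_of_ne (by omega), ih, Matrix.mul_add]

theorem prefixProd_update_smul (U : ∀ i : ℕ, Matrix (Fin (n (i + 1))) (Fin (n i)) ℝ)
    (j : ℕ) (c : ℝ) (M : Matrix (Fin (n (j + 1))) (Fin (n j)) ℝ) :
    ∀ s : ℕ, prefixProd n (Function.update U j (c • M)) (j + 1 + s)
      = c • prefixProd n (Function.update U j M) (j + 1 + s) := by
  intro s
  induction s with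
  | zero =>
    show Function.update U j (c • M) j * prefixProd n (Function.update U j (c • M)) j
      = c • (Function.update U j M j * prefixProd n (Function.update U j M) j)
    rw [Function.update_self, Function.update_self,
      prefixProd_update_of_le n _ _ _ _ le_rfl, prefixProd_update_of_le n _ _ _ _ le_rfl,
      Matrix.smul_mul]
  | succ s ih =>
    show Function.update U j (c • M) (j + 1 + s)
          * prefixProd n (Function.update U j (c • M)) (j + 1 + s)
      = c • (Function.update U j M (j + 1 + s)
          * prefixProd n (Function.update U j M) (j + 1 + s))
    rw [Function.update_of_ne (by omega), Function.update_of_ne (by omega), ih,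
      Matrix.mul_smul]

/-- `M ↦ prefixProd n (Function.update U j M) L` as a linear map, when `j < L`. -/
noncomputable def updLM (U : ∀ i : ℕ, Matrix (Fin (n (i + 1))) (Fin (n i)) ℝ)
    (j : ℕ) (hj : j < L) :
    Matrix (Fin (n (j + 1))) (Fin (n j)) ℝ →ₗ[ℝ] Matrix (Fin (n L)) (Fin (n 0)) ℝ where
  toFun M := prefixProd n (Function.update U j M) L
  map_add' M M' := by
    have h : j + 1 + (L - (j + 1)) = L := by omega
    have := prefixProd_update_add n U j M M' (L - (j + 1))
    rwa [h] at this
  map_smul' c M := by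
    have h : j + 1 + (L - (j + 1)) = L := by omega
    have := prefixProd_update_smul n U j c M (L - (j + 1))
    rwa [h] at this

@[simp] lemma updLM_apply (U : ∀ i : ℕ, Matrix (Fin (n (i + 1))) (Fin (n i)) ℝ)
    (j : ℕ) (hj : j < L) (M : Matrix (Fin (n (j + 1))) (Fin (n j)) ℝ) :
    updLM L n U j hj M = prefixProd n (Function.update U j M) L := rfl

theorem prefixProd_update_shift (U : ∀ i : ℕ, Matrix (Fin (n (i + 1))) (Fin (n i)) ℝ)
    (i : ℕ) (X : Matrix (Fin (n (i + 1))) (Fin (n (i + 1))) ℝ) :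
    ∀ s : ℕ, prefixProd n (Function.update U (i + 1) (U (i + 1) * X)) (i + 1 + 1 + s)
      = prefixProd n (Function.update U i (X * U i)) (i + 1 + 1 + s) := by
  intro s
  induction s with
  | zero =>
    show Function.update U (i + 1) (U (i + 1) * X) (i + 1)
          * prefixProd n (Function.update U (i + 1) (U (i + 1) * X)) (i + 1)
      = Function.update U i (X * U i) (i + 1)
          * prefixProd n (Function.update U i (X * U i)) (i + 1)
    rw [Function.update_self, Function.update_of_ne (by omega),
      prefixProd_update_of_le n _ _ _ _ le_rfl]
    show U (i + 1) * X * (U i * prefixProd n U i)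
      = U (i + 1) * (Function.update U i (X * U i) i
          * prefixProd n (Function.update U i (X * U i)) i)
    rw [Function.update_self, prefixProd_update_of_le n _ _ _ _ le_rfl]
    simp [Matrix.mul_assoc]
  | succ s ih =>
    show Function.update U (i + 1) (U (i + 1) * X) (i + 1 + 1 + s)
          * prefixProd n (Function.update U (i + 1) (U (i + 1) * X)) (i + 1 + 1 + s)
      = Function.update U i (X * U i) (i + 1 + 1 + s)
          * prefixProd n (Function.update U i (X * U i)) (i + 1 + 1 + s)
    rw [Function.update_of_ne (by omega), Function.update_of_ne (by omega), ih]

theorem prefixProd_update_shift_L (U : ∀ i : ℕ, Matrix (Fin (n (i + 1))) (Fin (n i)) ℝ)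
    (i : ℕ) (hi : i + 1 < L) (X : Matrix (Fin (n (i + 1))) (Fin (n (i + 1))) ℝ) :
    prefixProd n (Function.update U (i + 1) (U (i + 1) * X)) L
      = prefixProd n (Function.update U i (X * U i)) L := by
  have h : i + 1 + 1 + (L - (i + 1 + 1)) = L := by omega
  have := prefixProd_update_shift n U i X (L - (i + 1 + 1))
  rwa [h] at this

end LayerCalc

/-- For the `L`-layer linear network loss `ℓ(U_L, …, U_1) = f(U_L ⋯ U_1)`,
along any gradient-flow trajectory the quantities
`U_{i+1}ᵀ U_{i+1} − U_i U_iᵀ` are conserved. -/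
theorem linear_network_balancedness_conserved
    (L : ℕ) (hL : 2 ≤ L) (n : ℕ → ℕ) (hn : ∀ i ≤ L, 0 < n i)
    (f : Matrix (Fin (n L)) (Fin (n 0)) ℝ → ℝ) (hf : ContDiff ℝ 1 f)
    (T : ℝ) (hT : 0 < T)
    (θ : ℝ → EuclideanSpace ℝ ((i : Fin L) × (Fin (n (i + 1)) × Fin (n i))))
    (hflow : ∀ t ∈ Set.Ico (0 : ℝ) T,
      HasDerivWithinAt θ
        (-(gradient (fun p => f (prefixProd n (layerMatrixExt L n p) L)) (θ t)))
        (Set.Ico (0 : ℝ) T) t) :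
    ∀ (i : ℕ) (hi : i + 1 < L), ∀ t ∈ Set.Ico (0 : ℝ) T,
      (layerMatrix L n (θ t) ⟨i + 1, hi⟩)ᵀ * layerMatrix L n (θ t) ⟨i + 1, hi⟩ -
        layerMatrix L n (θ t) ⟨i, Nat.lt_of_succ_lt hi⟩ *
          (layerMatrix L n (θ t) ⟨i, Nat.lt_of_succ_lt hi⟩)ᵀ =
      (layerMatrix L n (θ 0) ⟨i + 1, hi⟩)ᵀ * layerMatrix L n (θ 0) ⟨i + 1, hi⟩ -
        layerMatrix L n (θ 0) ⟨i, Nat.lt_of_succ_lt hi⟩ *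
          (layerMatrix L n (θ 0) ⟨i, Nat.lt_of_succ_lt hi⟩)ᵀ := by
  intro i hi t ht
  set s : Set ℝ := Set.Ico (0 : ℝ) T with hsdef
  set g : Param L n → ℝ := fun p => f (prefixProd n (layerMatrixExt L n p) L) with hgdef
  have h0mem : (0 : ℝ) ∈ s := ⟨le_refl _, hT⟩
  set j0 : Fin L := ⟨i, Nat.lt_of_succ_lt hi⟩ with hj0
  set j1 : Fin L := ⟨i + 1, hi⟩ with hj1
  -- coordinatewise derivative of the flow
  have hcoord : ∀ (q : (i : Fin L) × (Fin (n (i + 1)) × Fin (n i))),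
      ∀ t ∈ s, HasDerivWithinAt (fun t => θ t q) (-(gradient g (θ t) q)) s t := by
    intro q t ht
    have := (EuclideanSpace.proj q).hasFDerivAt.comp_hasDerivWithinAt t (hflow t ht)
    simpa [Function.comp_def] using this
  -- gradient components
  have hgrad : ∀ (p : Param L n) (jf : Fin L) (x : Fin (n ((jf : ℕ) + 1)))
      (y : Fin (n (jf : ℕ))),
      gradient g p ⟨jf, (x, y)⟩
        = fderiv ℝ f (prefixProd n (layerMatrixExt L n p) L)
            (prefixProd n (Function.update (layerMatrixExt L n p) (jf : ℕ)
              (Matrix.single x y 1)) L) := by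
    intro p jf x y
    rw [hgdef]
    rw [gradient_formula L n f hf p ⟨jf, (x, y)⟩, dval_single_L L n p jf x y]
  ext a b
  -- the entry as a scalar function of time
  set φ : ℝ → ℝ := fun t =>
    (∑ c, θ t ⟨j1, (c, a)⟩ * θ t ⟨j1, (c, b)⟩) - ∑ c, θ t ⟨j0, (a, c)⟩ * θ t ⟨j0, (b, c)⟩
    with hφdef
  set δ : ℝ → ℝ := fun t =>
    (∑ c, ((-(gradient g (θ t) ⟨j1, (c, a)⟩)) * θ t ⟨j1, (c, b)⟩
        + θ t ⟨j1, (c, a)⟩ * (-(gradient g (θ t) ⟨j1, (c, b)⟩))))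
      - ∑ c, ((-(gradient g (θ t) ⟨j0, (a, c)⟩)) * θ t ⟨j0, (b, c)⟩
        + θ t ⟨j0, (a, c)⟩ * (-(gradient g (θ t) ⟨j0, (b, c)⟩))) with hδdef
  have hder : ∀ u ∈ s, HasDerivWithinAt φ (δ u) s u := by
    intro u hu
    simp only [hφdef, hδdef]
    exact ((HasDerivWithinAt.fun_sum fun c _ =>
        ((hcoord ⟨j1, (c, a)⟩ u hu).mul (hcoord ⟨j1, (c, b)⟩ u hu))).sub
      (HasDerivWithinAt.fun_sum fun c _ =>
        ((hcoord ⟨j0, (a, c)⟩ u hu).mul (hcoord ⟨j0, (b, c)⟩ u hu))))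
  have hδ0 : ∀ u ∈ s, δ u = 0 := by
    intro u hu
    set U := layerMatrixExt L n (θ u) with hU
    set W := prefixProd n (layerMatrixExt L n (θ u)) L with hW
    set G := (fderiv ℝ f W).toLinearMap with hG
    set g1 : Matrix (Fin (n (i + 1 + 1))) (Fin (n (i + 1))) ℝ →ₗ[ℝ] ℝ
      := G ∘ₗ updLM L n U (i + 1) hi with hg1
    set g0 : Matrix (Fin (n (i + 1))) (Fin (n i)) ℝ →ₗ[ℝ] ℝ
      := G ∘ₗ updLM L n U i (Nat.lt_of_succ_lt hi) with hg0
    have hga : ∀ (x : Fin (n (i + 1 + 1))) (y : Fin (n (i + 1))),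
        gradient g (θ u) ⟨j1, (x, y)⟩ = g1 (Matrix.single x y 1) := by
      intro x y
      exact hgrad (θ u) j1 x y
    have hgb : ∀ (x : Fin (n (i + 1))) (y : Fin (n i)),
        gradient g (θ u) ⟨j0, (x, y)⟩ = g0 (Matrix.single x y 1) := by
      intro x y
      exact hgrad (θ u) j0 x y
    have hU1 : ∀ (c : Fin (n (i + 1 + 1))) (x : Fin (n (i + 1))),
        θ u ⟨j1, (c, x)⟩ = U (i + 1) c x := by
      intro c x
      rw [hU]
      unfold layerMatrixExt
      rw [dif_pos hi]
      rfl
    have hU0 : ∀ (x : Fin (n (i + 1))) (y : Fin (n i)),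
        θ u ⟨j0, (x, y)⟩ = U i x y := by
      intro x y
      rw [hU]
      unfold layerMatrixExt
      rw [dif_pos (Nat.lt_of_succ_lt hi)]
      rfl
    have key : ∀ X : Matrix (Fin (n (i + 1))) (Fin (n (i + 1))) ℝ,
        g1 (U (i + 1) * X) = g0 (X * U i) := by
      intro X
      show G (prefixProd n (Function.update U (i + 1) (U (i + 1) * X)) L)
        = G (prefixProd n (Function.update U i (X * U i)) L)
      rw [prefixProd_update_shift_L L n U i hi X]
    rw [hδdef]
    simp only [hga, hgb, hU1, hU0, neg_mul, mul_neg, Finset.sum_add_distrib,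
      Finset.sum_neg_distrib]
    rw [sum_eval_L1 g1 (U (i + 1)) b a, sum_eval_L2 g1 (U (i + 1)) a b,
      sum_eval_L3 g0 (U i) b a, sum_eval_L4 g0 (U i) a b]
    rw [key (Matrix.single b a 1), key (Matrix.single a b 1)]
    ring
  have hconst : φ t = φ 0 := by
    have hbound : ∀ x ∈ s, ‖δ x‖ ≤ (0 : ℝ) := fun x hx => by
      rw [hδ0 x hx]; simp
    have hb := Convex.norm_image_sub_le_of_norm_hasDerivWithin_le
      hder hbound (convex_Ico (0 : ℝ) T) h0mem ht
    have hb' : φ t - φ 0 = 0 := by simpa using hb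
    linarith
  have hφt : ∀ u : ℝ,
      ((layerMatrix L n (θ u) j1)ᵀ * layerMatrix L n (θ u) j1 -
        layerMatrix L n (θ u) j0 * (layerMatrix L n (θ u) j0)ᵀ) a b = φ u := by
    intro u
    simp [Matrix.sub_apply, Matrix.mul_apply, Matrix.transpose_apply, layerMatrix, hφdef]
  rw [hφt t, hφt 0]
  exact hconst
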